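/- arXiv:2210.16506 — 3 statements merged into one kernel-verified Lean document; each statement's English description precedes it below -/
import Mathlib

section
/- In the no-limit clairvoyance game with stack size n, against player 2's strategy of calling a bet of size x with probability 1/(1+x) and player 1 bluffing with frequency x/(1+x) relative to value bets, the expected payoff to player 1 of betting size x is v(x) = x/(2(1+x)), which is strictly increasing in x on [0, n]. -/
/-- The value function `v(x) = x/(2(1+x))`. -/
noncomputable def clairvoyanceValue (x : ℝ) : ℝ := x / (2 * (1 + x))

/-- In the no-limit clairvoyance game with stack size `n`, against player 2 calling
a bet of `x` with probability `1/(1+x)` and player 1 bluffing with frequency `x/(1+x)`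
(relative to always value-betting with a winning hand), the expected payoff to player 1
of betting `x` equals `v(x) = x/(2(1+x))`, which is strictly increasing on `[0,n]`. -/
theorem clairvoyance_bet_value (n : ℝ) (hn : 0 < n) :
    (∀ x : ℝ, 0 ≤ x → x ≤ n →
      (1/2) * ((1/(1+x)) * (0.5 + x) + (1 - 1/(1+x)) * 0.5)
        + (1/2) * ((x/(1+x)) * ((1/(1+x)) * (-(0.5 + x)) + (1 - 1/(1+x)) * 0.5)
            + (1 - x/(1+x)) * (-0.5))
      = clairvoyanceValue x) ∧
    (∀ x y : ℝ, 0 ≤ x → x < y → y ≤ n →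
      clairvoyanceValue x < clairvoyanceValue y) := by
  constructor
  · intro x hx _
    have h : (1 + x) ≠ 0 := by linarith
    unfold clairvoyanceValue
    field_simp
    ring
  · intro x y hx hxy _
    have h1 : (0:ℝ) < 1 + x := by linarith
    have h2 : (0:ℝ) < 1 + y := by linarith
    unfold clairvoyanceValue
    rw [div_lt_div_iff₀ (by linarith) (by linarith)]
    nlinarith
end

section
/- Every observable perfect equilibrium of a two-player one-step extensive-form imperfect-information game is a Nash equilibrium of the game. -/
open Filter

/-!  An abstract two-player one-step extensive-form imperfect-information game
(OSEFG): player 1 receives a private type `τ₁ ∈ T1` uniformly at random and chooses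
`a₁ ∈ A1`; player 2 observes `a₁` (but not `τ₁`) and chooses `a₂ ∈ A2`; player `i`
receives payoff `uᵢ τ₁ a₁ a₂`. -/

/-- A behavioral strategy for player 1: a distribution over actions for each type. -/
def IsStrategy1 {T1 A1 : Type*} [Fintype A1] (σ : T1 → A1 → ℝ) : Prop :=
  (∀ τ a, 0 ≤ σ τ a) ∧ ∀ τ, ∑ a, σ τ a = 1

/-- A behavioral strategy for player 2: a distribution over actions for each
observed action of player 1. -/
def IsStrategy2 {A1 A2 : Type*} [Fintype A2] (σ : A1 → A2 → ℝ) : Prop :=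
  (∀ a b, 0 ≤ σ a b) ∧ ∀ a, ∑ b, σ a b = 1

/-- Expected utility with respect to payoff function `u`, with the type `τ₁` drawn
uniformly at random. -/
noncomputable def expUtil {T1 A1 A2 : Type*} [Fintype T1] [Fintype A1] [Fintype A2]
    (u : T1 → A1 → A2 → ℝ) (σ1 : T1 → A1 → ℝ) (σ2 : A1 → A2 → ℝ) : ℝ :=
  (1 / (Fintype.card T1 : ℝ)) * ∑ τ, ∑ a, ∑ b, σ1 τ a * σ2 a b * u τ a b

/-- Nash equilibrium of the OSEFG: no unilateral profitable deviation. -/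
def IsNashEq {T1 A1 A2 : Type*} [Fintype T1] [Fintype A1] [Fintype A2]
    (u1 u2 : T1 → A1 → A2 → ℝ) (σ1 : T1 → A1 → ℝ) (σ2 : A1 → A2 → ℝ) : Prop :=
  IsStrategy1 σ1 ∧ IsStrategy2 σ2 ∧
  (∀ σ1', IsStrategy1 σ1' → expUtil u1 σ1' σ2 ≤ expUtil u1 σ1 σ2) ∧
  (∀ σ2', IsStrategy2 σ2' → expUtil u2 σ1 σ2' ≤ expUtil u2 σ1 σ2)

/-- Nash equilibrium of the perturbed game `G_ε` in which player 1 must play the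
observed action `a1obs` with total probability (summed over types) at least `ε`. -/
def IsNashEqPert {T1 A1 A2 : Type*} [Fintype T1] [Fintype A1] [Fintype A2]
    (ε : ℝ) (a1obs : A1) (u1 u2 : T1 → A1 → A2 → ℝ)
    (σ1 : T1 → A1 → ℝ) (σ2 : A1 → A2 → ℝ) : Prop :=
  IsStrategy1 σ1 ∧ ε ≤ ∑ τ, σ1 τ a1obs ∧ IsStrategy2 σ2 ∧
  (∀ σ1', IsStrategy1 σ1' → ε ≤ ∑ τ, σ1' τ a1obs →
    expUtil u1 σ1' σ2 ≤ expUtil u1 σ1 σ2) ∧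
  (∀ σ2', IsStrategy2 σ2' → expUtil u2 σ1 σ2' ≤ expUtil u2 σ1 σ2)

/-- `(σ1, σ2)` is an observable perfect equilibrium relative to the observed action
`a1obs`: it is the limit of a sequence of Nash equilibria of perturbed games `G_ε`
with `ε → 0`. -/
def IsOPE {T1 A1 A2 : Type*} [Fintype T1] [Fintype A1] [Fintype A2]
    (a1obs : A1) (u1 u2 : T1 → A1 → A2 → ℝ)
    (σ1 : T1 → A1 → ℝ) (σ2 : A1 → A2 → ℝ) : Prop :=
  ∃ e : ℕ → ℝ, (∀ k, 0 < e k) ∧ Tendsto e atTop (nhds 0) ∧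
  ∃ s1 : ℕ → T1 → A1 → ℝ, ∃ s2 : ℕ → A1 → A2 → ℝ,
    (∀ k, IsNashEqPert (e k) a1obs u1 u2 (s1 k) (s2 k)) ∧
    (∀ τ a, Tendsto (fun k => s1 k τ a) atTop (nhds (σ1 τ a))) ∧
    (∀ a b, Tendsto (fun k => s2 k a b) atTop (nhds (σ2 a b)))

lemma expUtil_tendsto {T1 A1 A2 : Type*} [Fintype T1] [Fintype A1] [Fintype A2]
    (u : T1 → A1 → A2 → ℝ) (s1 : ℕ → T1 → A1 → ℝ) (s2 : ℕ → A1 → A2 → ℝ)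
    (σ1 : T1 → A1 → ℝ) (σ2 : A1 → A2 → ℝ)
    (h1 : ∀ τ a, Tendsto (fun k => s1 k τ a) atTop (nhds (σ1 τ a)))
    (h2 : ∀ a b, Tendsto (fun k => s2 k a b) atTop (nhds (σ2 a b))) :
    Tendsto (fun k => expUtil u (s1 k) (s2 k)) atTop (nhds (expUtil u σ1 σ2)) := by
  unfold expUtil
  apply Tendsto.const_mul
  apply tendsto_finset_sum; intro τ _
  apply tendsto_finset_sum; intro a _
  apply tendsto_finset_sum; intro b _
  exact ((h1 τ a).mul (h2 a b)).mul_const _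

/-- Every observable perfect equilibrium of a two-player one-step extensive-form
imperfect-information game is a Nash equilibrium of the game. -/
theorem ope_is_nash {T1 A1 A2 : Type*} [Fintype T1] [Fintype A1] [Fintype A2]
    [Nonempty T1] [Nonempty A1] [Nonempty A2]
    (u1 u2 : T1 → A1 → A2 → ℝ) (a1obs : A1)
    (σ1 : T1 → A1 → ℝ) (σ2 : A1 → A2 → ℝ)
    (h : IsOPE a1obs u1 u2 σ1 σ2) : IsNashEq u1 u2 σ1 σ2 := by
  obtain ⟨e, hepos, he0, s1, s2, hne, hc1, hc2⟩ := h
  have hstrat1 : ∀ k, IsStrategy1 (s1 k) := fun k => (hne k).1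
  have hstrat2 : ∀ k, IsStrategy2 (s2 k) := fun k => (hne k).2.2.1
  -- σ1 is a strategy
  have hσ1 : IsStrategy1 σ1 := by
    constructor
    · intro τ a
      exact le_of_tendsto_of_tendsto tendsto_const_nhds (hc1 τ a)
        (Eventually.of_forall fun k => (hstrat1 k).1 τ a)
    · intro τ
      have hsum : Tendsto (fun k => ∑ a, s1 k τ a) atTop (nhds (∑ a, σ1 τ a)) :=
        tendsto_finset_sum _ fun a _ => hc1 τ a
      have hsum' : Tendsto (fun k => ∑ a, s1 k τ a) atTop (nhds 1) := by
        simpa [(hstrat1 · |>.2 τ)] using (tendsto_const_nhds : Tendsto (fun _ : ℕ => (1:ℝ)) atTop (nhds 1))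
      exact tendsto_nhds_unique hsum hsum'
  have hσ2 : IsStrategy2 σ2 := by
    constructor
    · intro a b
      exact le_of_tendsto_of_tendsto tendsto_const_nhds (hc2 a b)
        (Eventually.of_forall fun k => (hstrat2 k).1 a b)
    · intro a
      have hsum : Tendsto (fun k => ∑ b, s2 k a b) atTop (nhds (∑ b, σ2 a b)) :=
        tendsto_finset_sum _ fun b _ => hc2 a b
      have hsum' : Tendsto (fun k => ∑ b, s2 k a b) atTop (nhds 1) := by
        simpa [(hstrat2 · |>.2 a)] using (tendsto_const_nhds : Tendsto (fun _ : ℕ => (1:ℝ)) atTop (nhds 1))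
      exact tendsto_nhds_unique hsum hsum'
  refine ⟨hσ1, hσ2, ?_, ?_⟩
  · -- player 1 deviations
    intro σ1' hσ1'
    classical
    -- perturbed deviation: mix σ1' with the point mass on a1obs
    set t : ℕ → T1 → A1 → ℝ :=
      fun k τ a => (1 - e k) * σ1' τ a + e k * (if a = a1obs then 1 else 0) with ht
    have htc : ∀ τ a, Tendsto (fun k => t k τ a) atTop (nhds (σ1' τ a)) := by
      intro τ a
      have : Tendsto (fun k => (1 - e k) * σ1' τ a + e k * (if a = a1obs then 1 else 0))
          atTop (nhds ((1 - 0) * σ1' τ a + 0 * (if a = a1obs then 1 else 0))) :=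
        (((tendsto_const_nhds.sub he0).mul tendsto_const_nhds).add
          (he0.mul tendsto_const_nhds))
      simpa only [sub_zero, one_mul, zero_mul, add_zero] using this
    have hev : ∀ᶠ k in atTop, e k ≤ 1 := by
      filter_upwards [he0.eventually_le_const (by norm_num : (0:ℝ) < 1)] with k hk
      exact hk
    have hkey : ∀ᶠ k in atTop,
        expUtil u1 (t k) (s2 k) ≤ expUtil u1 (s1 k) (s2 k) := by
      filter_upwards [hev] with k hk
      have hek := hepos k
      have hstrat : IsStrategy1 (t k) := by
        constructor
        · intro τ a
          have h1 : 0 ≤ (1 - e k) * σ1' τ a :=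
            mul_nonneg (by linarith) (hσ1'.1 τ a)
          have h2 : 0 ≤ e k * (if a = a1obs then 1 else 0) :=
            mul_nonneg hek.le (by positivity)
          simpa [ht] using add_nonneg h1 h2
        · intro τ
          simp only [ht, Finset.sum_add_distrib, ← Finset.mul_sum, hσ1'.2 τ]
          rw [Finset.sum_ite_eq' Finset.univ a1obs (fun _ => (1:ℝ))]
          simp
      have hcon : e k ≤ ∑ τ, t k τ a1obs := by
        have hs : ∀ τ, t k τ a1obs = (1 - e k) * σ1' τ a1obs + e k := by
          intro τ; simp [ht]
        have hσnn : 0 ≤ ∑ τ, σ1' τ a1obs :=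
          Finset.sum_nonneg fun τ _ => hσ1'.1 τ a1obs
        have hcard : 1 ≤ (Fintype.card T1 : ℝ) := by
          exact_mod_cast Fintype.card_pos
        calc e k = e k * 1 := by ring
          _ ≤ e k * (Fintype.card T1 : ℝ) := by nlinarith
          _ ≤ (1 - e k) * (∑ τ, σ1' τ a1obs) + e k * (Fintype.card T1 : ℝ) := by nlinarith
          _ = ∑ τ, t k τ a1obs := by
              simp only [hs, Finset.sum_add_distrib, Finset.sum_const, Finset.card_univ,
                nsmul_eq_mul, ← Finset.mul_sum]
              ring
      exact (hne k).2.2.2.1 (t k) hstrat hcon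
    exact le_of_tendsto_of_tendsto
      (expUtil_tendsto u1 t s2 σ1' σ2 htc hc2)
      (expUtil_tendsto u1 s1 s2 σ1 σ2 hc1 hc2) hkey
  · -- player 2 deviations
    intro σ2' hσ2'
    exact le_of_tendsto_of_tendsto
      (expUtil_tendsto u2 s1 (fun _ => σ2') σ1 σ2' hc1 fun a b => tendsto_const_nhds)
      (expUtil_tendsto u2 s1 s2 σ1 σ2 hc1 hc2)
      (Eventually.of_forall fun k => (hne k).2.2.2.2 σ2' hσ2')
end

section
/- Every two-player zero-sum extensive-form game with perfect recall has at least one observable perfect equilibrium: the perturbed games Gᵉ (adding the constraint cᵀx₁ ≥ ε to player 1's sequence-form polytope) have Nash equilibria for all small ε > 0, and by compactness of the strategy polytopes, any sequence of such equilibria as ε → 0 has a convergent subsequence whose limit is an observable perfect equilibrium. -/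
open Matrix Filter

section VI
variable {H : Type*} [NormedAddCommGroup H] [InnerProductSpace ℝ H] [CompleteSpace H]

local notation "⟪" x ", " y "⟫" => @inner ℝ _ _ x y

lemma exists_proj {K : Set H} (hcl : IsClosed K) (hconv : Convex ℝ K) (hne : K.Nonempty)
    (u : H) : ∃ v ∈ K, ∀ w ∈ K, ⟪u - v, w - v⟫ ≤ 0 := by
  obtain ⟨v, hv, hmin⟩ := exists_norm_eq_iInf_of_complete_convex hne hcl.isComplete hconv u
  exact ⟨v, hv, (norm_eq_iInf_iff_real_inner_le_zero hconv hv).1 hmin⟩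

lemma proj_nonexpansive {K : Set H} {u v p q : H} (hp : p ∈ K) (hq : q ∈ K)
    (hup : ∀ w ∈ K, ⟪u - p, w - p⟫ ≤ 0) (hvq : ∀ w ∈ K, ⟪v - q, w - q⟫ ≤ 0) :
    ‖p - q‖ ≤ ‖u - v‖ := by
  have h1 := hup q hq
  have h2 := hvq p hp
  have key : ‖p - q‖ ^ 2 ≤ ⟪u - v, p - q⟫ := by
    have e1 : ⟪u - v, p - q⟫ - ⟪p - q, p - q⟫ = ⟪u - p, p - q⟫ - ⟪v - q, p - q⟫ := by
      rw [← inner_sub_left, ← inner_sub_left]; congr 1; abel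
    have e2 : ⟪u - p, p - q⟫ = -⟪u - p, q - p⟫ := by
      rw [← inner_neg_right]; congr 1; abel
    have e3 := real_inner_self_eq_norm_sq (p - q)
    nlinarith [e1, e2, e3]
  have h3 : ⟪u - v, p - q⟫ ≤ ‖u - v‖ * ‖p - q‖ := real_inner_le_norm _ _
  nlinarith [norm_nonneg (p - q), norm_nonneg (u - v), sq_nonneg (‖p - q‖ - ‖u - v‖)]

set_option maxHeartbeats 1000000 in
lemma exists_VI {K : Set H} (hcl : IsClosed K) (hconv : Convex ℝ K) (hne : K.Nonempty)
    (L : H →L[ℝ] H) (hskew : ∀ z, ⟪L z, z⟫ = 0) {lam : ℝ} (hlam : 0 < lam) :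
    ∃ z ∈ K, ∀ w ∈ K, 0 ≤ ⟪lam • z + L z, w - z⟫ := by
  classical
  set M : ℝ := ‖L‖ with hM
  have hM0 : 0 ≤ M := norm_nonneg _
  set η : ℝ := lam / (lam ^ 2 + M ^ 2) with hη
  have hden : 0 < lam ^ 2 + M ^ 2 := by positivity
  have hη0 : 0 < η := by positivity
  have hηlam : η * lam ≤ 1 := by
    rw [hη, div_mul_eq_mul_div, div_le_one hden]; nlinarith
  set ρ : ℝ := 1 - η * lam with hρ
  have hρ0 : 0 ≤ ρ := by linarith
  have hρ1 : ρ < 1 := by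
    have : 0 < η * lam := by positivity
    linarith
  -- the affine-free linear map G z = z - η • (lam • z + L z)
  set G : H →L[ℝ] H := (1 - η * lam) • ContinuousLinearMap.id ℝ H - η • L with hG
  have hGapply : ∀ z, G z = z - η • (lam • z + L z) := by
    intro z
    simp [hG, sub_smul, smul_smul, smul_add]
    module
  have hGnorm : ∀ z, ‖G z‖ ≤ Real.sqrt ρ * ‖z‖ := by
    intro z
    have h1 : ‖G z‖ ^ 2 = ρ * ‖z‖ ^ 2 - (η ^ 2 * (M ^ 2 * ‖z‖ ^ 2 - ‖L z‖ ^ 2)) := by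
      have : G z = (1 - η * lam) • z - η • L z := by
        simp [hG, ContinuousLinearMap.sub_apply, ContinuousLinearMap.smul_apply]
      have hkey : η * (lam ^ 2 + M ^ 2) = lam := by rw [hη]; field_simp
      rw [this, ← real_inner_self_eq_norm_sq, inner_sub_sub_self]
      simp only [real_inner_smul_left, real_inner_smul_right]
      have hz := real_inner_self_eq_norm_sq z
      have hLz := real_inner_self_eq_norm_sq (L z)
      have hsk := hskew z
      have hsym0 : ⟪z, L z⟫ = 0 := by rw [real_inner_comm]; exact hsk
      rw [hz, hLz, hsk, hsym0, hρ]
      ring_nf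
      linear_combination (‖z‖ ^ 2 * η) * hkey
    have h2 : ‖L z‖ ≤ M * ‖z‖ := L.le_opNorm z
    have h3 : ‖G z‖ ^ 2 ≤ ρ * ‖z‖ ^ 2 := by
      nlinarith [mul_nonneg (sub_nonneg.2 h2) (add_nonneg (mul_nonneg hM0 (norm_nonneg z))
        (norm_nonneg (L z))), sq_nonneg η]
    have h4 : (Real.sqrt ρ * ‖z‖) ^ 2 = ρ * ‖z‖ ^ 2 := by
      rw [mul_pow, Real.sq_sqrt hρ0]
    nlinarith [norm_nonneg (G z), Real.sqrt_nonneg ρ, norm_nonneg z,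
      mul_nonneg (Real.sqrt_nonneg ρ) (norm_nonneg z)]
  -- projection onto K
  choose P hPmem hPchar using fun u => exists_proj hcl hconv hne u
  haveI : Nonempty K := hne.to_subtype
  haveI : CompleteSpace K := hcl.completeSpace_coe
  set Φ : K → K := fun z => ⟨P (G z.1), hPmem _⟩ with hΦ
  have hlip : LipschitzWith (Real.toNNReal (Real.sqrt ρ)) Φ := by
    rw [lipschitzWith_iff_dist_le_mul]
    intro a b
    have hd1 : dist (Φ a) (Φ b) = ‖P (G a.1) - P (G b.1)‖ := by
      rw [Subtype.dist_eq, dist_eq_norm]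
    have hd2 : dist a b = ‖a.1 - b.1‖ := by rw [Subtype.dist_eq, dist_eq_norm]
    rw [hd1, hd2]
    have hne1 : ‖P (G a.1) - P (G b.1)‖ ≤ ‖G a.1 - G b.1‖ :=
      proj_nonexpansive (hPmem _) (hPmem _) (hPchar _) (hPchar _)
    have : G a.1 - G b.1 = G (a.1 - b.1) := (map_sub G _ _).symm
    rw [this] at hne1
    refine hne1.trans ?_
    rw [Real.coe_toNNReal _ (Real.sqrt_nonneg ρ)]
    exact hGnorm _
  have hcontr : ContractingWith (Real.toNNReal (Real.sqrt ρ)) Φ := by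
    constructor
    · rw [← NNReal.coe_lt_one, Real.coe_toNNReal _ (Real.sqrt_nonneg ρ)]
      rw [show (1:ℝ) = Real.sqrt 1 by simp]
      exact Real.sqrt_lt_sqrt hρ0 hρ1
    · exact hlip
  set z : K := ContractingWith.fixedPoint Φ hcontr with hzdef
  have hfix : Φ z = z := ContractingWith.fixedPoint_isFixedPt hcontr
  refine ⟨z.1, z.2, ?_⟩
  intro w hw
  have hchar := hPchar (G z.1) w hw
  have hPz : P (G z.1) = z.1 := congrArg Subtype.val hfix
  rw [hPz] at hchar
  have : G z.1 - z.1 = -(η • (lam • z.1 + L z.1)) := by rw [hGapply]; abel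
  rw [this, inner_neg_left, real_inner_smul_left] at hchar
  have h0 := neg_nonpos.mp hchar
  exact (mul_nonneg_iff_of_pos_left hη0).mp h0

end VI

section Saddle
open ContinuousLinearMap
local notation "⟪" x ", " y "⟫" => @inner ℝ _ _ x y

variable {E F : Type*} [NormedAddCommGroup E] [InnerProductSpace ℝ E] [CompleteSpace E]
    [NormedAddCommGroup F] [InnerProductSpace ℝ F] [CompleteSpace F]

lemma exists_saddle (A : E →L[ℝ] F) {S : Set E} {T : Set F}
    (hS : IsCompact S) (hT : IsCompact T) (hSc : Convex ℝ S) (hTc : Convex ℝ T)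
    (hSne : S.Nonempty) (hTne : T.Nonempty) :
    ∃ p ∈ S, ∃ q ∈ T, (∀ y' ∈ T, ⟪A p, y'⟫ ≤ ⟪A p, q⟫) ∧ (∀ x' ∈ S, ⟪A p, q⟫ ≤ ⟪A x', q⟫) := by
  classical
  set e := WithLp.prodContinuousLinearEquiv 2 ℝ E F
  set G : E × F →L[ℝ] E × F :=
    ((adjoint A).comp (ContinuousLinearMap.snd ℝ E F)).prod
      ((-A).comp (ContinuousLinearMap.fst ℝ E F))
  set L : WithLp 2 (E × F) →L[ℝ] WithLp 2 (E × F) :=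
    (e.symm.toContinuousLinearMap.comp G).comp e.toContinuousLinearMap with hL
  have hskew : ∀ z, ⟪L z, z⟫ = 0 := by
    intro z
    rw [WithLp.prod_inner_apply]
    have h1 : (L z).ofLp.1 = adjoint A z.ofLp.2 := rfl
    have h2 : (L z).ofLp.2 = -(A z.ofLp.1) := rfl
    rw [h1, h2, adjoint_inner_left, inner_neg_left, real_inner_comm]
    ring
  set K : Set (WithLp 2 (E × F)) := e ⁻¹' (S ×ˢ T) with hK
  have hKcl : IsClosed K := (hS.isClosed.prod hT.isClosed).preimage e.continuous
  have hKconv : Convex ℝ K := (hSc.prod hTc).linear_preimage (e : WithLp 2 (E × F) →ₗ[ℝ] E × F)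
  have hKne : K.Nonempty := ⟨e.symm (hSne.choose, hTne.choose), by
    simp only [hK, Set.mem_preimage, ContinuousLinearEquiv.apply_symm_apply]
    exact Set.mk_mem_prod hSne.choose_spec hTne.choose_spec⟩
  have hmemK : ∀ z : WithLp 2 (E × F), z ∈ K ↔ z.fst ∈ S ∧ z.snd ∈ T := fun z => Iff.rfl
  -- regularized equilibria
  set lam : ℕ → ℝ := fun n => 1 / (n + 1) with hlam
  have hlampos : ∀ n, 0 < lam n := fun n => Nat.one_div_pos_of_nat
  choose z hzK hzVI using fun n => exists_VI hKcl hKconv hKne L hskew (hlampos n)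
  set x : ℕ → E := fun n => (z n).fst with hx
  set y : ℕ → F := fun n => (z n).snd with hy
  have hxS : ∀ n, x n ∈ S := fun n => ((hmemK (z n)).1 (hzK n)).1
  have hyT : ∀ n, y n ∈ T := fun n => ((hmemK (z n)).1 (hzK n)).2
  have hIneq1 : ∀ n, ∀ x' ∈ S, 0 ≤ lam n * ⟪x n, x' - x n⟫ + ⟪y n, A (x' - x n)⟫ := by
    intro n x' hx'
    set w : WithLp 2 (E × F) := e.symm (x', y n) with hw
    have hwK : w ∈ K := by
      simp only [hK, Set.mem_preimage, hw, ContinuousLinearEquiv.apply_symm_apply]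
      exact Set.mk_mem_prod hx' (hyT n)
    have hVI := hzVI n w hwK
    rw [WithLp.prod_inner_apply] at hVI
    have h1 : (lam n • z n + L (z n)).ofLp.1 = lam n • x n + adjoint A (y n) := rfl
    have h2 : (lam n • z n + L (z n)).ofLp.2 = lam n • y n + -(A (x n)) := rfl
    have h3 : (w - z n).ofLp.1 = x' - x n := rfl
    have h4 : (w - z n).ofLp.2 = y n - y n := rfl
    rw [h1, h2, h3, h4, sub_self, inner_zero_right, add_zero, inner_add_left,
      real_inner_smul_left, adjoint_inner_left] at hVI
    exact hVI
  have hIneq2 : ∀ n, ∀ y' ∈ T, 0 ≤ lam n * ⟪y n, y' - y n⟫ - ⟪A (x n), y' - y n⟫ := by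
    intro n y' hy'
    set w : WithLp 2 (E × F) := e.symm (x n, y') with hw
    have hwK : w ∈ K := by
      simp only [hK, Set.mem_preimage, hw, ContinuousLinearEquiv.apply_symm_apply]
      exact Set.mk_mem_prod (hxS n) hy'
    have hVI := hzVI n w hwK
    rw [WithLp.prod_inner_apply] at hVI
    have h1 : (lam n • z n + L (z n)).ofLp.1 = lam n • x n + adjoint A (y n) := rfl
    have h2 : (lam n • z n + L (z n)).ofLp.2 = lam n • y n + -(A (x n)) := rfl
    have h3 : (w - z n).ofLp.1 = x n - x n := rfl
    have h4 : (w - z n).ofLp.2 = y' - y n := rfl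
    rw [h1, h2, h3, h4, sub_self, inner_zero_right, zero_add, inner_add_left,
      real_inner_smul_left, inner_neg_left] at hVI
    linarith
  -- convergent subsequence
  obtain ⟨p, hpS, φ, hφ, hxp⟩ := hS.tendsto_subseq hxS
  obtain ⟨q, hqT, ψ, hψ, hyq⟩ := hT.tendsto_subseq (fun n => hyT (φ n))
  set σ : ℕ → ℕ := φ ∘ ψ with hσ
  have hσmono : StrictMono σ := hφ.comp hψ
  have hxpσ : Tendsto (fun n => x (σ n)) atTop (nhds p) := hxp.comp hψ.tendsto_atTop
  have hyqσ : Tendsto (fun n => y (σ n)) atTop (nhds q) := hyq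
  have hlam0 : Tendsto (fun n => lam (σ n)) atTop (nhds 0) :=
    tendsto_one_div_add_atTop_nhds_zero_nat.comp hσmono.tendsto_atTop
  refine ⟨p, hpS, q, hqT, ?_, ?_⟩
  · intro y' hy'
    have hten : Tendsto (fun n => lam (σ n) * ⟪y (σ n), y' - y (σ n)⟫ -
        ⟪A (x (σ n)), y' - y (σ n)⟫) atTop
        (nhds (0 * ⟪q, y' - q⟫ - ⟪A p, y' - q⟫)) := by
      exact ((hlam0.mul (hyqσ.inner (tendsto_const_nhds.sub hyqσ))).sub
        (((A.continuous.tendsto p).comp hxpσ).inner (tendsto_const_nhds.sub hyqσ)))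
    have hle := ge_of_tendsto' hten (fun n => hIneq2 (σ n) y' hy')
    rw [zero_mul, zero_sub, neg_nonneg, inner_sub_right] at hle
    linarith
  · intro x' hx'
    have hten : Tendsto (fun n => lam (σ n) * ⟪x (σ n), x' - x (σ n)⟫ +
        ⟪y (σ n), A (x' - x (σ n))⟫) atTop
        (nhds (0 * ⟪p, x' - p⟫ + ⟪q, A (x' - p)⟫)) := by
      exact ((hlam0.mul (hxpσ.inner (tendsto_const_nhds.sub hxpσ))).add
        (hyqσ.inner ((A.continuous.tendsto _).comp (tendsto_const_nhds.sub hxpσ))))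
    have hle := ge_of_tendsto' hten (fun n => hIneq1 (σ n) x' hx')
    rw [zero_mul, zero_add, map_sub, inner_sub_right] at hle
    have h1 : ⟪q, A x'⟫ = ⟪A x', q⟫ := real_inner_comm _ _
    have h2 : ⟪q, A p⟫ = ⟪A p, q⟫ := real_inner_comm _ _
    linarith
end Saddle


set_option maxHeartbeats 1000000

/-- Every two-player zero-sum extensive-form game with perfect recall (in sequence
form, with compact convex nonempty strategy polytopes) has at least one observable
perfect equilibrium: the perturbed games `Gᵉ` (adding the constraint `cᵀx₁ ≥ ε` to
player 1's polytope, feasible for small `ε`) have Nash equilibria, and by compactness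
a sequence of such equilibria as `ε → 0` has a convergent subsequence, whose limit
`(x₁*, x₂*)` is an observable perfect equilibrium. -/
theorem observable_perfect_equilibrium_exists (d1 d2 k1 k2 : ℕ)
    (F1 : Matrix (Fin k1) (Fin d1) ℝ) (f1 : Fin k1 → ℝ)
    (F2 : Matrix (Fin k2) (Fin d2) ℝ) (f2 : Fin k2 → ℝ)
    (A2 : Matrix (Fin d2) (Fin d1) ℝ)
    (c : Fin d1 → ℝ) (hc : ∀ i, c i = 0 ∨ c i = 1)
    (X1 : Set (Fin d1 → ℝ)) (hX1 : X1 = {x | F1.mulVec x = f1 ∧ ∀ i, 0 ≤ x i})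
    (X2 : Set (Fin d2 → ℝ)) (hX2 : X2 = {x | F2.mulVec x = f2 ∧ ∀ i, 0 ≤ x i})
    (hne1 : X1.Nonempty) (hne2 : X2.Nonempty)
    (hcomp1 : IsCompact X1) (hcomp2 : IsCompact X2)
    (hconv1 : Convex ℝ X1) (hconv2 : Convex ℝ X2)
    (hfeas : ∃ x ∈ X1, 0 < c ⬝ᵥ x) :
    ∃ x1 ∈ X1, ∃ x2 ∈ X2,
      ∃ e : ℕ → ℝ, (∀ k, 0 < e k) ∧ Tendsto e atTop (nhds 0) ∧
      ∃ y1 : ℕ → Fin d1 → ℝ, ∃ y2 : ℕ → Fin d2 → ℝ,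
        (∀ k, y1 k ∈ X1 ∧ e k ≤ c ⬝ᵥ y1 k ∧ y2 k ∈ X2 ∧
          (∀ z ∈ X2, z ⬝ᵥ A2.mulVec (y1 k) ≤ y2 k ⬝ᵥ A2.mulVec (y1 k)) ∧
          (∀ z ∈ X1, e k ≤ c ⬝ᵥ z → y2 k ⬝ᵥ A2.mulVec (y1 k) ≤ y2 k ⬝ᵥ A2.mulVec z)) ∧
        Tendsto y1 atTop (nhds x1) ∧ Tendsto y2 atTop (nhds x2) := by

  classical
  obtain ⟨x0, hx0X, hx0pos⟩ := hfeas
  set ε₀ : ℝ := c ⬝ᵥ x0 with hε₀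
  set e : ℕ → ℝ := fun k => ε₀ * (1 / (k + 1)) with he
  have hepos : ∀ k, 0 < e k := fun k => mul_pos hx0pos Nat.one_div_pos_of_nat
  have hetend : Tendsto e atTop (nhds 0) := by
    have h := tendsto_one_div_add_atTop_nhds_zero_nat.const_mul ε₀
    rw [mul_zero] at h
    exact h
  have hele : ∀ k, e k ≤ ε₀ := by
    intro k
    have h1 : 1 / ((k : ℝ) + 1) ≤ 1 := by
      rw [div_le_one (by positivity)]
      linarith [Nat.cast_nonneg (α := ℝ) k]
    calc e k = ε₀ * (1 / ((k : ℝ) + 1)) := rfl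
      _ ≤ ε₀ * 1 := by nlinarith
      _ = ε₀ := mul_one _
  -- continuous linear map version of A2
  set A : EuclideanSpace ℝ (Fin d1) →L[ℝ] EuclideanSpace ℝ (Fin d2) :=
    LinearMap.toContinuousLinearMap
      { toFun := fun x => WithLp.toLp 2 (A2.mulVec x)
        map_add' := fun x y => by simp [Matrix.mulVec_add]
        map_smul' := fun r x => by simp [Matrix.mulVec_smul] } with hA
  have hAapply : ∀ v : EuclideanSpace ℝ (Fin d1), A v = A2.mulVec v := fun _ => rfl
  have hinner : ∀ u v : EuclideanSpace ℝ (Fin d2), @inner ℝ _ _ u v = u ⬝ᵥ v := by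
    intro u v; simp [PiLp.inner_apply, dotProduct, mul_comm]
  -- the constrained sets
  have hcdot : Continuous (fun x : EuclideanSpace ℝ (Fin d1) => c ⬝ᵥ x) := by
    exact (show Continuous (fun x : Fin d1 → ℝ => c ⬝ᵥ x) by unfold dotProduct; fun_prop).comp
      (by fun_prop : Continuous (WithLp.ofLp : EuclideanSpace ℝ (Fin d1) → Fin d1 → ℝ))
  have hlin : IsLinearMap ℝ (fun x : Fin d1 → ℝ => c ⬝ᵥ x) :=
    ⟨fun x y => dotProduct_add _ _ _, fun r x => by rw [dotProduct_smul]⟩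
  have hX1c : IsCompact (WithLp.ofLp ⁻¹' X1 : Set (EuclideanSpace ℝ (Fin d1))) := (PiLp.continuousLinearEquiv 2 ℝ (fun _ : Fin d1 => ℝ)).toHomeomorph.isCompact_preimage.2 hcomp1
  have hX2c : IsCompact (WithLp.ofLp ⁻¹' X2 : Set (EuclideanSpace ℝ (Fin d2))) := (PiLp.continuousLinearEquiv 2 ℝ (fun _ : Fin d2 => ℝ)).toHomeomorph.isCompact_preimage.2 hcomp2
  have hX1v : Convex ℝ (WithLp.ofLp ⁻¹' X1 : Set (EuclideanSpace ℝ (Fin d1))) := hconv1.linear_preimage (PiLp.continuousLinearEquiv 2 ℝ (fun _ : Fin d1 => ℝ)).toLinearMap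
  have hX2v : Convex ℝ (WithLp.ofLp ⁻¹' X2 : Set (EuclideanSpace ℝ (Fin d2))) := hconv2.linear_preimage (PiLp.continuousLinearEquiv 2 ℝ (fun _ : Fin d2 => ℝ)).toLinearMap
  set S : ℕ → Set (EuclideanSpace ℝ (Fin d1)) :=
    fun k => WithLp.ofLp ⁻¹' X1 ∩ {x | e k ≤ c ⬝ᵥ x} with hS
  have hScomp : ∀ k, IsCompact (S k) := by
    intro k
    refine IsCompact.inter_right hX1c ?_
    exact isClosed_le continuous_const hcdot
  have hSconv : ∀ k, Convex ℝ (S k) := by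
    intro k
    refine Convex.inter hX1v ?_
    exact (convex_halfSpace_ge hlin (e k)).linear_preimage (PiLp.continuousLinearEquiv 2 ℝ (fun _ : Fin d1 => ℝ)).toLinearMap
  have hSne : ∀ k, (S k).Nonempty := fun k => ⟨WithLp.toLp 2 x0, hx0X, hele k⟩
  -- equilibria of the perturbed games
  have hsaddle : ∀ k, ∃ p ∈ S k, ∃ q ∈ (WithLp.ofLp ⁻¹' X2 : Set (EuclideanSpace ℝ (Fin d2))),
      (∀ y' ∈ (WithLp.ofLp ⁻¹' X2 : Set (EuclideanSpace ℝ (Fin d2))), @inner ℝ _ _ (A p) y' ≤ @inner ℝ _ _ (A p) q) ∧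
      (∀ x' ∈ S k, @inner ℝ _ _ (A p) q ≤ @inner ℝ _ _ (A x') q) := by
    intro k
    exact exists_saddle A (hScomp k) hX2c
      (hSconv k) hX2v
      (hSne k) ⟨WithLp.toLp 2 hne2.choose, hne2.choose_spec⟩
  choose p hpS q hqX2 hmax hmin using hsaddle
  have hpX1 : ∀ k, p k ∈ (WithLp.ofLp ⁻¹' X1 : Set (EuclideanSpace ℝ (Fin d1))) := fun k => (hpS k).1
  -- convergent subsequence
  obtain ⟨x1, hx1X, φ, hφ, hxp⟩ :=
    hX1c.tendsto_subseq hpX1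
  obtain ⟨x2, hx2X, ψ, hψ, hyq⟩ :=
    hX2c.tendsto_subseq
      (fun n => hqX2 (φ n))
  set σ : ℕ → ℕ := φ ∘ ψ with hσ
  have hσmono : StrictMono σ := hφ.comp hψ
  refine ⟨x1.ofLp, hx1X, x2.ofLp, hx2X, e ∘ σ, fun k => hepos _, ?_, fun k => (p (σ k)).ofLp,
    fun k => (q (σ k)).ofLp,
    ?_, ?_, ?_⟩
  · exact hetend.comp hσmono.tendsto_atTop
  · intro k
    refine ⟨hpX1 _, (hpS (σ k)).2, hqX2 _, ?_, ?_⟩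
    · intro z hz
      have := hmax (σ k) (WithLp.toLp 2 z) hz
      rw [hinner, hinner, hAapply] at this
      simp only [WithLp.ofLp_toLp] at this
      rw [dotProduct_comm (A2.mulVec (p (σ k))) z, dotProduct_comm (A2.mulVec (p (σ k))) (q (σ k))] at this
      exact this
    · intro z hzX hze
      have := hmin (σ k) (WithLp.toLp 2 z) ⟨hzX, hze⟩
      rw [hinner, hinner, hAapply, hAapply] at this
      simp only [WithLp.ofLp_toLp] at this
      rw [dotProduct_comm (A2.mulVec (p (σ k))) (q (σ k)), dotProduct_comm (A2.mulVec z) (q (σ k))] at this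
      exact this
  · exact ((PiLp.continuous_ofLp 2 _).tendsto x1).comp (hxp.comp hψ.tendsto_atTop)
  · exact ((PiLp.continuous_ofLp 2 _).tendsto x2).comp hyq
end
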